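/- For every γ̄ > 0 and all real numbers 0 ≤ g_l ≤ g_u, the integral ∫_{g_l}^{g_u} ln(1 + γ̄ g) e^{−g} dg equals e^{−g_l} ln(1 + γ̄ g_l) − e^{−g_u} ln(1 + γ̄ g_u) + e^{1/γ̄} · (E₁(1/γ̄ + g_l) − E₁(1/γ̄ + g_u)). -/

import Mathlib

open MeasureTheory Real

/-- The exponential integral function `E₁(z) = ∫_z^∞ e^{−t}/t dt`. -/
noncomputable def expInt (z : ℝ) : ℝ := ∫ t in Set.Ioi z, Real.exp (-t) / t

lemma integrableOn_expInt_Ioi {a : ℝ} (ha : 0 < a) :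
    IntegrableOn (fun t => Real.exp (-t) / t) (Set.Ioi a) := by
  have h1 : IntegrableOn (fun t => Real.exp (-t) * (1 / a)) (Set.Ioi a) := by
    have := (exp_neg_integrableOn_Ioi a (b := 1) one_pos).mul_const (1 / a)
    simp only [one_div, neg_one_mul] at this ⊢
    exact this
  apply Integrable.mono' h1
  · refine (ContinuousOn.div ?_ continuousOn_id ?_).aestronglyMeasurable measurableSet_Ioi
    · exact (Real.continuous_exp.comp continuous_neg).continuousOn
    · exact fun t ht => ne_of_gt (ha.trans ht)
  · filter_upwards [ae_restrict_mem measurableSet_Ioi] with t ht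
    have ht' : 0 < t := ha.trans ht
    rw [Real.norm_eq_abs, abs_of_nonneg (div_nonneg (Real.exp_pos _).le ht'.le)]
    rw [div_eq_mul_inv, one_div]
    exact mul_le_mul_of_nonneg_left (inv_anti₀ ha ht.le) (Real.exp_pos _).le

lemma expInt_sub {a b : ℝ} (ha : 0 < a) (hab : a ≤ b) :
    expInt a - expInt b = ∫ t in a..b, Real.exp (-t) / t := by
  have hb : 0 < b := ha.trans_le hab
  have hIoi : IntegrableOn (fun t => Real.exp (-t) / t) (Set.Ioi a) := integrableOn_expInt_Ioi ha
  have hIoc : IntegrableOn (fun t => Real.exp (-t) / t) (Set.Ioc a b) :=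
    hIoi.mono_set Set.Ioc_subset_Ioi_self
  have hIoib : IntegrableOn (fun t => Real.exp (-t) / t) (Set.Ioi b) := integrableOn_expInt_Ioi hb
  have hsplit : expInt a = (∫ t in Set.Ioc a b, Real.exp (-t) / t) + expInt b := by
    rw [expInt, expInt, ← Set.Ioc_union_Ioi_eq_Ioi hab]
    exact setIntegral_union (Set.Ioc_disjoint_Ioi le_rfl) measurableSet_Ioi hIoc hIoib
  rw [hsplit, intervalIntegral.integral_of_le hab, add_sub_cancel_right]

/-- Closed-form ergodic throughput (in nats) of the PHAT-PIP scheme (Theorem 3). -/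
theorem phat_pip_ergodic_throughput (γ : ℝ) (hγ : 0 < γ) (gl gu : ℝ)
    (hgl : 0 ≤ gl) (hglu : gl ≤ gu) :
    ∫ g in gl..gu, Real.log (1 + γ * g) * Real.exp (-g)
      = Real.exp (-gl) * Real.log (1 + γ * gl) - Real.exp (-gu) * Real.log (1 + γ * gu)
        + Real.exp (1 / γ) * (expInt (1 / γ + gl) - expInt (1 / γ + gu)) := by
  have hIcc : Set.uIcc gl gu = Set.Icc gl gu := Set.uIcc_of_le hglu
  have hpos : ∀ x ∈ Set.uIcc gl gu, (0:ℝ) < 1 + γ * x := by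
    intro x hx
    rw [hIcc] at hx
    have : 0 ≤ x := hgl.trans hx.1
    positivity
  -- integration by parts
  have hu : ∀ x ∈ Set.uIcc gl gu,
      HasDerivAt (fun x => Real.log (1 + γ * x)) (γ / (1 + γ * x)) x := by
    intro x hx
    have h1 : HasDerivAt (fun x => 1 + γ * x) γ x := by
      simpa using ((hasDerivAt_id x).const_mul γ).const_add 1
    simpa using h1.log (ne_of_gt (hpos x hx))
  have hv : ∀ x ∈ Set.uIcc gl gu,
      HasDerivAt (fun x => -Real.exp (-x)) (Real.exp (-x)) x := by
    intro x _
    have h1 : HasDerivAt (fun x : ℝ => Real.exp (-x)) (Real.exp (-x) * (-1)) x :=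
      (hasDerivAt_neg x).exp
    have h2 := h1.neg
    simp only [mul_neg, mul_one, neg_neg] at h2
    exact h2
  have hu' : IntervalIntegrable (fun x => γ / (1 + γ * x)) volume gl gu := by
    apply ContinuousOn.intervalIntegrable
    exact ContinuousOn.div continuousOn_const (by fun_prop) (fun x hx => ne_of_gt (hpos x hx))
  have hv' : IntervalIntegrable (fun x => Real.exp (-x)) volume gl gu :=
    (Real.continuous_exp.comp continuous_neg).intervalIntegrable _ _
  have parts := intervalIntegral.integral_mul_deriv_eq_deriv_mul hu hv hu' hv'
  rw [parts]
  -- handle the remaining integral via substitution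
  have key : (∫ x in gl..gu, γ / (1 + γ * x) * -Real.exp (-x))
      = -(Real.exp (1 / γ) * (expInt (1 / γ + gl) - expInt (1 / γ + gu))) := by
    have hsub : (∫ x in gl..gu, γ / (1 + γ * x) * -Real.exp (-x))
        = ∫ x in gl..gu, -(Real.exp (1/γ) * ((fun t => Real.exp (-t) / t) (x + 1/γ))) := by
      apply intervalIntegral.integral_congr
      intro x hx
      have h1 : (0:ℝ) < 1 + γ * x := hpos x hx
      have h2 : (0:ℝ) < x + 1/γ := by
        have : γ * (x + 1/γ) = 1 + γ * x := by field_simp; ring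
        nlinarith
      simp only
      have he : Real.exp (1/γ) * Real.exp (-(x + 1/γ)) = Real.exp (-x) := by
        rw [← Real.exp_add]; ring_nf
      rw [← mul_div_assoc, he]
      have hd : γ / (1 + γ * x) = 1 / (x + 1/γ) := by
        rw [div_eq_div_iff h1.ne' h2.ne']
        field_simp
        ring
      rw [hd]
      ring
    rw [hsub, intervalIntegral.integral_neg, intervalIntegral.integral_const_mul,
      intervalIntegral.integral_comp_add_right (fun t => Real.exp (-t) / t) (1/γ),
      show gl + 1/γ = 1/γ + gl from add_comm _ _, show gu + 1/γ = 1/γ + gu from add_comm _ _]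
    have h1 : 0 < 1/γ + gl := by positivity
    have h2 : 1/γ + gl ≤ 1/γ + gu := by linarith
    rw [← expInt_sub h1 h2]
  rw [key]
  ring
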